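/- For λ ∈ (0,1), there exists no nontrivial real C² function u on [0,1] such that u(0) = 0, u'(0) > 0, u(ρ) > 0 on (0,1), u(1) > 0, u'(1) > 0, u' changes sign on (0,1), and at every interior critical point ρ* ∈ (0,1) of u one has u''(ρ*) = β_λ(ρ*)u(ρ*), where β_λ(ρ) = λ(1+λ)/(1-ρ²) + 2(1-6ρ²+ρ⁴)/(ρ²(1-ρ²)(1+ρ²)²). -/

import Mathlib

noncomputable def β (lam ρ : ℝ) : ℝ :=
  lam * (1 + lam) / (1 - ρ^2) + 2 * (1 - 6*ρ^2 + ρ^4) / (ρ^2 * (1 - ρ^2) * (1 + ρ^2)^2)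

open Set Filter Topology

lemma beta_eq (lam s : ℝ) (hs : 0 < s) (hs1 : s < 1) :
    β lam s = (lam * (1 + lam) * s^2 * (1 + s^2)^2 + 2 * (1 - 6*s^2 + s^4)) /
      (s^2 * (1 - s^2) * (1 + s^2)^2) := by
  have h1 : s^2 ≠ 0 := by positivity
  have h2 : (1:ℝ) - s^2 ≠ 0 := by nlinarith
  have h3 : (1:ℝ) + s^2 ≠ 0 := by positivity
  unfold β
  field_simp

lemma gkey (c x y : ℝ) (hc2 : c < 2) (hc0 : 0 < c) (hx0 : 0 < x) (hxy : x < y) (hy1 : y < 1)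
    (hgx : c*x*(1+x)^2 + 2*(1-6*x+x^2) ≤ 0) : c*y*(1+y)^2 + 2*(1-6*y+y^2) < 0 := by
  have h1y : 0 < 1 - y := by linarith
  have h1x : 0 < 1 - x := by linarith
  have hyx : 0 < y - x := by linarith
  have key : (1-x)*(c*y*(1+y)^2+2*(1-6*y+y^2)) =
      (1-y)*(c*x*(1+x)^2+2*(1-6*x+x^2)) + (y-x)*(4*c-8)
      - (y-x)*(1-x)*(1-y)*(c*(x+y+1)+(2*c+2)) := by ring
  have t1 : (1-y) * (c*x*(1+x)^2 + 2*(1-6*x+x^2)) ≤ 0 :=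
    mul_nonpos_iff.mpr (Or.inl ⟨h1y.le, hgx⟩)
  have t2 : (y-x)*(4*c-8) < 0 := mul_neg_of_pos_of_neg hyx (by linarith)
  have t3 : 0 ≤ (y-x)*(1-x)*(1-y)*(c*(x+y+1)+(2*c+2)) := by
    have : 0 < c*(x+y+1)+(2*c+2) := by nlinarith
    positivity
  have hfin : (1-x)*(c*y*(1+y)^2+2*(1-6*y+y^2)) < 0 := by linarith
  by_contra h
  push_neg at h
  nlinarith [mul_nonneg h1x.le h]

lemma beta_key (lam s t : ℝ) (hlam0 : 0 < lam) (hlam1 : lam < 1)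
    (hs : 0 < s) (hst : s < t) (ht : t < 1)
    (h1 : β lam s ≤ 0) (h2 : 0 ≤ β lam t) : False := by
  have ht0 : 0 < t := hs.trans hst
  have hs1 : s < 1 := hst.trans ht
  have hc0 : 0 < lam * (1 + lam) := by nlinarith
  have hc2 : lam * (1 + lam) < 2 := by nlinarith
  have hdens : 0 < s^2 * (1 - s^2) * (1 + s^2)^2 :=
    mul_pos (mul_pos (pow_pos hs 2) (by nlinarith)) (by positivity)
  have hdent : 0 < t^2 * (1 - t^2) * (1 + t^2)^2 :=
    mul_pos (mul_pos (pow_pos ht0 2) (by nlinarith)) (by positivity)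
  have hgs : lam*(1+lam)*(s^2)*(1+s^2)^2 + 2*(1-6*(s^2)+(s^2)^2) ≤ 0 := by
    rw [beta_eq lam s hs hs1] at h1
    rcases div_nonpos_iff.mp h1 with ⟨_, hden⟩ | ⟨hnum, _⟩
    · linarith
    · nlinarith [hnum]
  have hgt : 0 ≤ lam*(1+lam)*(t^2)*(1+t^2)^2 + 2*(1-6*(t^2)+(t^2)^2) := by
    rw [beta_eq lam t ht0 ht] at h2
    rcases div_nonneg_iff.mp h2 with ⟨hnum, _⟩ | ⟨_, hden⟩
    · nlinarith [hnum]
    · linarith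
  have := gkey (lam*(1+lam)) (s^2) (t^2) hc2 hc0 (by positivity) (by nlinarith) (by nlinarith)
    (by nlinarith [hgs])
  nlinarith [this, hgt]

-- slope helper lemmas
lemma slope_ev_neg {f : ℝ → ℝ} {a L : ℝ} (hf : HasDerivAt f L a) (hL : L < 0) :
    ∀ᶠ x in 𝓝[≠] a, slope f a x < 0 :=
  (hasDerivAt_iff_tendsto_slope.mp hf).eventually (eventually_lt_nhds hL)

lemma slope_ev_pos {f : ℝ → ℝ} {a L : ℝ} (hf : HasDerivAt f L a) (hL : 0 < L) :
    ∀ᶠ x in 𝓝[≠] a, 0 < slope f a x :=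
  (hasDerivAt_iff_tendsto_slope.mp hf).eventually (eventually_gt_nhds hL)

lemma left_subset_ne (a : ℝ) : 𝓝[<] a ≤ 𝓝[≠] a :=
  nhdsWithin_mono a (fun x hx => ne_of_lt hx)

lemma right_subset_ne (a : ℝ) : 𝓝[>] a ≤ 𝓝[≠] a :=
  nhdsWithin_mono a (fun x hx => ne_of_gt hx)

lemma ev_pos_right {f : ℝ → ℝ} {a L : ℝ} (hf : HasDerivAt f L a) (h0 : f a = 0) (hL : 0 < L) :
    ∀ᶠ x in 𝓝[>] a, 0 < f x := by
  filter_upwards [(slope_ev_pos hf hL).filter_mono (right_subset_ne a),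
    self_mem_nhdsWithin] with x hx hxa
  have hxa' : (0:ℝ) < x - a := sub_pos.mpr hxa
  have h2 : 0 < slope f a x * (x - a) := mul_pos hx hxa'
  rwa [slope_def_field, div_mul_cancel₀ _ (ne_of_gt hxa'), h0, sub_zero] at h2

lemma ev_neg_right {f : ℝ → ℝ} {a L : ℝ} (hf : HasDerivAt f L a) (h0 : f a = 0) (hL : L < 0) :
    ∀ᶠ x in 𝓝[>] a, f x < 0 := by
  filter_upwards [(slope_ev_neg hf hL).filter_mono (right_subset_ne a),
    self_mem_nhdsWithin] with x hx hxa
  have hxa' : (0:ℝ) < x - a := sub_pos.mpr hxa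
  have h2 : slope f a x * (x - a) < 0 := mul_neg_of_neg_of_pos hx hxa'
  rwa [slope_def_field, div_mul_cancel₀ _ (ne_of_gt hxa'), h0, sub_zero] at h2

lemma ev_gt_left {f : ℝ → ℝ} {a L : ℝ} (hf : HasDerivAt f L a) (hL : L < 0) :
    ∀ᶠ x in 𝓝[<] a, f a < f x := by
  filter_upwards [(slope_ev_neg hf hL).filter_mono (left_subset_ne a),
    self_mem_nhdsWithin] with x hx hxa
  have hxa' : x - a < 0 := sub_neg.mpr hxa
  have h2 : 0 < slope f a x * (x - a) := mul_pos_of_neg_of_neg hx hxa'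
  rw [slope_def_field, div_mul_cancel₀ _ (ne_of_lt hxa')] at h2
  linarith

lemma ev_lt_right {f : ℝ → ℝ} {a L : ℝ} (hf : HasDerivAt f L a) (hL : L < 0) :
    ∀ᶠ x in 𝓝[>] a, f x < f a := by
  filter_upwards [(slope_ev_neg hf hL).filter_mono (right_subset_ne a),
    self_mem_nhdsWithin] with x hx hxa
  have hxa' : (0:ℝ) < x - a := sub_pos.mpr hxa
  have h2 : slope f a x * (x - a) < 0 := mul_neg_of_neg_of_pos hx hxa'
  rw [slope_def_field, div_mul_cancel₀ _ (ne_of_gt hxa')] at h2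
  linarith

-- right endpoint: derivative within at a right endpoint of an interval where f has a min at 1
lemma endpoint_deriv_nonpos {f : ℝ → ℝ} {c L : ℝ} (hc0 : 0 ≤ c) (hc : c < 1)
    (hf : HasDerivWithinAt f L (Set.Icc (0:ℝ) 1) 1)
    (hmin : ∀ x ∈ Set.Icc c 1, f 1 ≤ f x) : L ≤ 0 := by
  have hsub : Set.Icc c 1 ⊆ Set.Icc (0:ℝ) 1 := Set.Icc_subset_Icc hc0 le_rfl
  have hf' : HasDerivWithinAt f L (Set.Icc c 1) 1 := hf.mono hsub
  have htend := hasDerivWithinAt_iff_tendsto_slope.mp hf'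
  have hset : Set.Icc c 1 \ {1} = Set.Ico c 1 := Set.Icc_sdiff_right
  rw [hset] at htend
  have hne : (𝓝[Set.Ico c 1] (1:ℝ)).NeBot := by
    apply mem_closure_iff_nhdsWithin_neBot.mp
    rw [closure_Ico (ne_of_lt hc)]
    exact ⟨hc.le, le_rfl⟩
  refine le_of_tendsto htend ?_
  filter_upwards [self_mem_nhdsWithin] with x hx
  rw [slope_def_field]
  apply div_nonpos_of_nonneg_of_nonpos
  · have := hmin x ⟨hx.1, hx.2.le⟩; linarith
  · linarith [hx.2]

theorem no_positive_function_with_critical_structure (lam : ℝ)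
    (hlam : lam ∈ Set.Ioo (0:ℝ) 1) (u : ℝ → ℝ)
    (hu : ContDiffOn ℝ 2 u (Set.Icc (0:ℝ) 1))
    (hne : ∃ ρ ∈ Set.Icc (0:ℝ) 1, u ρ ≠ 0)
    (h0 : u 0 = 0)
    (h0' : 0 < derivWithin u (Set.Icc (0:ℝ) 1) 0)
    (hpos : ∀ ρ ∈ Set.Ioo (0:ℝ) 1, 0 < u ρ)
    (h1 : 0 < u 1)
    (h1' : 0 < derivWithin u (Set.Icc (0:ℝ) 1) 1)
    (hsign : ∃ a ∈ Set.Ioo (0:ℝ) 1, ∃ b ∈ Set.Ioo (0:ℝ) 1, deriv u a * deriv u b < 0)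
    (hcrit : ∀ ρ ∈ Set.Ioo (0:ℝ) 1, deriv u ρ = 0 →
      deriv (deriv u) ρ = β lam ρ * u ρ) :
    False := by
  have hcont : ContinuousOn u (Set.Icc (0:ℝ) 1) := hu.continuousOn
  -- differentiability facts at interior points
  have hdiff : ∀ ρ ∈ Set.Ioo (0:ℝ) 1, HasDerivAt u (deriv u ρ) ρ := by
    intro ρ hρ
    have hmem : Set.Icc (0:ℝ) 1 ∈ 𝓝 ρ := Icc_mem_nhds hρ.1 hρ.2
    exact ((hu.contDiffAt hmem).differentiableAt (by norm_num)).hasDerivAt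
  have hdiff2 : ∀ ρ ∈ Set.Ioo (0:ℝ) 1, HasDerivAt (deriv u) (deriv (deriv u) ρ) ρ := by
    intro ρ hρ
    have hmem : Set.Icc (0:ℝ) 1 ∈ 𝓝 ρ := Icc_mem_nhds hρ.1 hρ.2
    have hca : ContDiffAt ℝ 2 u ρ := hu.contDiffAt hmem
    obtain ⟨v, hv, hvcd⟩ := hca.contDiffOn le_rfl (by simp)
    obtain ⟨w, hw_sub, hw_open, hw_mem⟩ := mem_nhds_iff.mp hv
    have hcd' : ContDiffOn ℝ 1 (deriv u) w :=
      (hvcd.mono hw_sub).deriv_of_isOpen hw_open (by norm_num)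
    exact (((hcd'.differentiableOn one_ne_zero) ρ hw_mem).differentiableAt
      (hw_open.mem_nhds hw_mem)).hasDerivAt
  -- find a point C with negative derivative
  obtain ⟨a, ha, b, hb, hab⟩ := hsign
  obtain ⟨C, hC, hC'⟩ : ∃ C ∈ Set.Ioo (0:ℝ) 1, deriv u C < 0 := by
    rcases lt_or_ge (deriv u a) 0 with h | h
    · exact ⟨a, ha, h⟩
    · refine ⟨b, hb, ?_⟩; nlinarith
  have hCd := hdiff C hC
  -- maximum on [0, C]
  obtain ⟨ρ₁, hρ₁mem, hρ₁max⟩ := isCompact_Icc.exists_isMaxOn (Set.nonempty_Icc.mpr hC.1.le)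
    (hcont.mono (Set.Icc_subset_Icc le_rfl hC.2.le))
  have huC : 0 < u C := hpos C hC
  have hρ₁C : u C ≤ u ρ₁ := hρ₁max ⟨hC.1.le, le_rfl⟩
  have hρ₁0 : ρ₁ ≠ 0 := by
    intro h; rw [h, h0] at hρ₁C; linarith
  have hρ₁ne : ρ₁ ≠ C := by
    intro h
    have hev := ev_gt_left hCd hC'
    have hIoo : Set.Ioo (0:ℝ) C ∈ 𝓝[<] C := Ioo_mem_nhdsLT_of_mem ⟨hC.1, le_rfl⟩
    obtain ⟨x, hx1, hx2⟩ := (hev.and (eventually_of_mem hIoo (fun x hx => hx))).exists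
    have := hρ₁max ⟨hx2.1.le, hx2.2.le⟩
    rw [h] at this; simp only [Set.mem_setOf_eq] at this; linarith
  have hρ₁Ioo : ρ₁ ∈ Set.Ioo 0 C :=
    ⟨lt_of_le_of_ne hρ₁mem.1 (Ne.symm hρ₁0), lt_of_le_of_ne hρ₁mem.2 hρ₁ne⟩
  have hρ₁Ioo1 : ρ₁ ∈ Set.Ioo (0:ℝ) 1 := ⟨hρ₁Ioo.1, hρ₁Ioo.2.trans hC.2⟩
  have hρ₁deriv : deriv u ρ₁ = 0 := by
    have : IsLocalMax u ρ₁ := hρ₁max.isLocalMax (Icc_mem_nhds (by linarith [hρ₁Ioo.1]) hρ₁Ioo.2)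
    exact this.deriv_eq_zero
  have hβ₁ : β lam ρ₁ ≤ 0 := by
    by_contra hβ
    push_neg at hβ
    have hL : 0 < deriv (deriv u) ρ₁ := by
      rw [hcrit ρ₁ hρ₁Ioo1 hρ₁deriv]
      exact mul_pos hβ (hpos ρ₁ hρ₁Ioo1)
    have hev := ev_pos_right (hdiff2 ρ₁ hρ₁Ioo1) hρ₁deriv hL
    obtain ⟨u', hu', hsub⟩ := mem_nhdsGT_iff_exists_Ioo_subset.mp hev
    set d := (ρ₁ + min u' C) / 2 with hd
    have hmin' : ρ₁ < min u' C := lt_min hu' hρ₁Ioo.2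
    have hd1 : ρ₁ < d := by rw [hd]; linarith
    have hd2 : d < min u' C := by rw [hd]; linarith
    have hmono : StrictMonoOn u (Set.Icc ρ₁ d) := by
      apply strictMonoOn_of_deriv_pos (convex_Icc _ _)
      · apply hcont.mono
        apply Set.Icc_subset_Icc hρ₁Ioo1.1.le
        have : d < 1 := lt_of_lt_of_le (hd2.trans_le (min_le_right _ _)) hC.2.le
        linarith
      · intro x hx
        rw [interior_Icc] at hx
        exact hsub ⟨hx.1, hx.2.trans (hd2.trans_le (min_le_left _ _))⟩
    have h3 : u ρ₁ < u d := hmono (Set.left_mem_Icc.mpr hd1.le) ⟨hd1.le, le_rfl⟩ hd1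
    have h4 : u d ≤ u ρ₁ := hρ₁max ⟨by linarith [hρ₁Ioo.1], le_of_lt (hd2.trans_le (min_le_right _ _))⟩
    linarith
  -- minimum on [C, 1]
  obtain ⟨ρ₂, hρ₂mem, hρ₂min⟩ := isCompact_Icc.exists_isMinOn (Set.nonempty_Icc.mpr hC.2.le)
    (hcont.mono (Set.Icc_subset_Icc hC.1.le le_rfl))
  have hρ₂ne : ρ₂ ≠ C := by
    intro h
    have hev := ev_lt_right hCd hC'
    have hIoo : Set.Ioo C 1 ∈ 𝓝[>] C := Ioo_mem_nhdsGT_of_mem ⟨le_rfl, hC.2⟩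
    obtain ⟨x, hx1, hx2⟩ := (hev.and (eventually_of_mem hIoo (fun x hx => hx))).exists
    have := hρ₂min ⟨hx2.1.le, hx2.2.le⟩
    rw [h] at this; simp only [Set.mem_setOf_eq] at this; linarith
  have hρ₂1 : ρ₂ ≠ 1 := by
    intro h
    have hder : HasDerivWithinAt u (derivWithin u (Set.Icc (0:ℝ) 1) 1) (Set.Icc (0:ℝ) 1) 1 := by
      apply DifferentiableWithinAt.hasDerivWithinAt
      exact (hu.differentiableOn (by norm_num)) 1 ⟨by norm_num, le_rfl⟩
    have := endpoint_deriv_nonpos hC.1.le hC.2 hder (fun x hx => by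
      have := hρ₂min hx; rw [h] at this; exact this)
    linarith
  have hρ₂Ioo : ρ₂ ∈ Set.Ioo C 1 :=
    ⟨lt_of_le_of_ne hρ₂mem.1 (Ne.symm hρ₂ne), lt_of_le_of_ne hρ₂mem.2 hρ₂1⟩
  have hρ₂Ioo1 : ρ₂ ∈ Set.Ioo (0:ℝ) 1 := ⟨hC.1.trans hρ₂Ioo.1, hρ₂Ioo.2⟩
  have hρ₂deriv : deriv u ρ₂ = 0 := by
    have : IsLocalMin u ρ₂ := hρ₂min.isLocalMin (Icc_mem_nhds hρ₂Ioo.1 hρ₂Ioo.2)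
    exact this.deriv_eq_zero
  have hβ₂ : 0 ≤ β lam ρ₂ := by
    by_contra hβ
    push_neg at hβ
    have hL : deriv (deriv u) ρ₂ < 0 := by
      rw [hcrit ρ₂ hρ₂Ioo1 hρ₂deriv]
      exact mul_neg_of_neg_of_pos hβ (hpos ρ₂ hρ₂Ioo1)
    have hev := ev_neg_right (hdiff2 ρ₂ hρ₂Ioo1) hρ₂deriv hL
    obtain ⟨u', hu', hsub⟩ := mem_nhdsGT_iff_exists_Ioo_subset.mp hev
    set d := (ρ₂ + min u' 1) / 2 with hd
    have hmin' : ρ₂ < min u' 1 := lt_min hu' hρ₂Ioo.2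
    have hd1 : ρ₂ < d := by rw [hd]; linarith
    have hd2 : d < min u' 1 := by rw [hd]; linarith
    have hanti : StrictAntiOn u (Set.Icc ρ₂ d) := by
      apply strictAntiOn_of_deriv_neg (convex_Icc _ _)
      · apply hcont.mono
        apply Set.Icc_subset_Icc (le_of_lt (hC.1.trans hρ₂Ioo.1))
        exact le_of_lt (hd2.trans_le (min_le_right _ _))
      · intro x hx
        rw [interior_Icc] at hx
        exact hsub ⟨hx.1, hx.2.trans (hd2.trans_le (min_le_left _ _))⟩
    have h3 : u d < u ρ₂ := hanti (Set.left_mem_Icc.mpr hd1.le) ⟨hd1.le, le_rfl⟩ hd1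
    have h4 : u ρ₂ ≤ u d := hρ₂min ⟨by linarith [hρ₂Ioo.1], le_of_lt (hd2.trans_le (min_le_right _ _))⟩
    linarith
  exact beta_key lam ρ₁ ρ₂ hlam.1 hlam.2 hρ₁Ioo1.1 (hρ₁Ioo.2.trans hρ₂Ioo.1) hρ₂Ioo1.2 hβ₁ hβ₂
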